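/- The relative entropy of nonlocality is a Bell nonlocality monotone: for every no-signaling behavior P in the (r,s) Bell scenario and every LOSR wiring W from the (r,s) scenario to the (r_f,s_f) scenario, S_nl(W(P)) ≤ S_nl(P); moreover S_nl(Q) = 0 for every local behavior Q. -/

import Mathlib

open scoped ENNReal
open Finset

/-- A probability distribution on a finite type. -/
def IsDist {Z : Type*} [Fintype Z] (p : Z → ℝ) : Prop :=
  (∀ z, 0 ≤ p z) ∧ ∑ z, p z = 1

/-- Relative entropy (Kullback-Leibler divergence) of finitely supported
distributions, valued in `[0,∞]`, with the conventions `0·log(0/t) = 0` and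
`S(p‖q) = ∞` whenever `q` vanishes at a point where `p` does not. -/
noncomputable def relEnt {Z : Type*} [Fintype Z] (p q : Z → ℝ) : ℝ≥0∞ :=
  if ∃ z, p z ≠ 0 ∧ q z = 0 then ⊤
  else ENNReal.ofReal (∑ z, p z * Real.log (p z / q z))

/-- A behavior in the (r,s) Bell scenario: `P a b x y = P(a,b|x,y)`. -/
def IsBehavior {r s : ℕ} (P : Fin r → Fin r → Fin s → Fin s → ℝ) : Prop :=
  (∀ a b x y, 0 ≤ P a b x y) ∧ ∀ x y, ∑ a, ∑ b, P a b x y = 1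

/-- The no-signaling conditions. -/
def NoSignaling {r s : ℕ} (P : Fin r → Fin r → Fin s → Fin s → ℝ) : Prop :=
  (∀ b x x' y, ∑ a, P a b x y = ∑ a, P a b x' y) ∧
  (∀ a x y y', ∑ b, P a b x y = ∑ b, P a b x y')

/-- Local (local-hidden-variable) behavior. -/
def IsLocal {r s : ℕ} (P : Fin r → Fin r → Fin s → Fin s → ℝ) : Prop :=
  ∃ (n : ℕ) (q : Fin n → ℝ) (PA : Fin r → Fin s → Fin n → ℝ)
    (PB : Fin r → Fin s → Fin n → ℝ),
    IsDist q ∧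
    (∀ x l, (∀ a, 0 ≤ PA a x l) ∧ ∑ a, PA a x l = 1) ∧
    (∀ y l, (∀ b, 0 ≤ PB b y l) ∧ ∑ b, PB b y l = 1) ∧
    (∀ a b x y, P a b x y = ∑ l, q l * PA a x l * PB b y l)

/-- Output distribution `P(·,·|x,y)` of a behavior for fixed inputs. -/
def outDist {r s : ℕ} (P : Fin r → Fin r → Fin s → Fin s → ℝ) (x y : Fin s) :
    Fin r × Fin r → ℝ := fun ab => P ab.1 ab.2 x y

/-- The behavior relative entropy `S_b(P‖P')`: the maximum over input pairs
`(x,y)` of the relative entropy of the output distributions. -/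
noncomputable def Sb {r s : ℕ} (P P' : Fin r → Fin r → Fin s → Fin s → ℝ) : ℝ≥0∞ :=
  Finset.univ.sup fun xy : Fin s × Fin s =>
    relEnt (outDist P xy.1 xy.2) (outDist P' xy.1 xy.2)

/-- A global wiring from the (r,s) scenario to the (rf,sf) scenario. -/
structure GlobalWiring (r s rf sf : ℕ) where
  I : Fin s → Fin s → Fin sf → Fin sf → ℝ          -- I x y χ ψ  =  I(x,y|χ,ψ)
  O : Fin rf → Fin rf → Fin r → Fin r → Fin s → Fin s → Fin sf → Fin sf → ℝ
    -- O α β a b x y χ ψ  =  O(α,β|a,b,x,y,χ,ψ)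
  I_nonneg : ∀ x y χ ψ, 0 ≤ I x y χ ψ
  I_sum : ∀ χ ψ, ∑ x, ∑ y, I x y χ ψ = 1
  O_nonneg : ∀ α β a b x y χ ψ, 0 ≤ O α β a b x y χ ψ
  O_sum : ∀ a b x y χ ψ, ∑ α, ∑ β, O α β a b x y χ ψ = 1

/-- Action of a global wiring on a behavior. -/
noncomputable def GlobalWiring.apply {r s rf sf : ℕ} (W : GlobalWiring r s rf sf)
    (P : Fin r → Fin r → Fin s → Fin s → ℝ) :
    Fin rf → Fin rf → Fin sf → Fin sf → ℝ :=
  fun α β χ ψ => ∑ a, ∑ b, ∑ x, ∑ y,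
    W.O α β a b x y χ ψ * P a b x y * W.I x y χ ψ

/-- LOSR wiring: a global wiring whose input and output boxes are local. -/
def GlobalWiring.IsLOSR {r s rf sf : ℕ} (W : GlobalWiring r s rf sf) : Prop :=
  ∃ (n m : ℕ) (q : Fin n → ℝ) (q' : Fin m → ℝ)
    (IA : Fin s → Fin sf → Fin n → ℝ) (IB : Fin s → Fin sf → Fin n → ℝ)
    (OA : Fin rf → Fin r → Fin s → Fin sf → Fin m → ℝ)
    (OB : Fin rf → Fin r → Fin s → Fin sf → Fin m → ℝ),
    IsDist q ∧ IsDist q' ∧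
    (∀ χ l, (∀ x, 0 ≤ IA x χ l) ∧ ∑ x, IA x χ l = 1) ∧
    (∀ ψ l, (∀ y, 0 ≤ IB y ψ l) ∧ ∑ y, IB y ψ l = 1) ∧
    (∀ a x χ u, (∀ α, 0 ≤ OA α a x χ u) ∧ ∑ α, OA α a x χ u = 1) ∧
    (∀ b y ψ u, (∀ β, 0 ≤ OB β b y ψ u) ∧ ∑ β, OB β b y ψ u = 1) ∧
    (∀ x y χ ψ, W.I x y χ ψ = ∑ l, q l * IA x χ l * IB y ψ l) ∧
    (∀ α β a b x y χ ψ,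
      W.O α β a b x y χ ψ = ∑ u, q' u * OA α a x χ u * OB β b y ψ u)

/-- UCLOSR wiring: a global wiring whose input and output boxes are products. -/
def GlobalWiring.IsUCLOSR {r s rf sf : ℕ} (W : GlobalWiring r s rf sf) : Prop :=
  ∃ (IA : Fin s → Fin sf → ℝ) (IB : Fin s → Fin sf → ℝ)
    (OA : Fin rf → Fin r → Fin s → Fin sf → ℝ)
    (OB : Fin rf → Fin r → Fin s → Fin sf → ℝ),
    (∀ χ, (∀ x, 0 ≤ IA x χ) ∧ ∑ x, IA x χ = 1) ∧
    (∀ ψ, (∀ y, 0 ≤ IB y ψ) ∧ ∑ y, IB y ψ = 1) ∧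
    (∀ a x χ, (∀ α, 0 ≤ OA α a x χ) ∧ ∑ α, OA α a x χ = 1) ∧
    (∀ b y ψ, (∀ β, 0 ≤ OB β b y ψ) ∧ ∑ β, OB β b y ψ = 1) ∧
    (∀ x y χ ψ, W.I x y χ ψ = IA x χ * IB y ψ) ∧
    (∀ α β a b x y χ ψ, W.O α β a b x y χ ψ = OA α a x χ * OB β b y ψ)

/-- The relative entropy of nonlocality `S_nl`. -/
noncomputable def Snl {r s : ℕ} (P : Fin r → Fin r → Fin s → Fin s → ℝ) : ℝ≥0∞ :=
  ⨅ (Q : Fin r → Fin r → Fin s → Fin s → ℝ) (_ : IsBehavior Q ∧ IsLocal Q), Sb P Q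

/-- The uniform-input statistical strength `S_u`. -/
noncomputable def Su {r s : ℕ} (P : Fin r → Fin r → Fin s → Fin s → ℝ) : ℝ≥0∞ :=
  ⨅ (Q : Fin r → Fin r → Fin s → Fin s → ℝ) (_ : IsBehavior Q ∧ IsLocal Q),
    ((s : ℝ≥0∞) ^ 2)⁻¹ * ∑ x, ∑ y, relEnt (outDist P x y) (outDist Q x y)

/-- The uncorrelated-input statistical strength `S_uc`. -/
noncomputable def Suc {r s : ℕ} (P : Fin r → Fin r → Fin s → Fin s → ℝ) : ℝ≥0∞ :=
  ⨆ (DA : Fin s → ℝ) (DB : Fin s → ℝ) (_ : IsDist DA ∧ IsDist DB),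
    ⨅ (Q : Fin r → Fin r → Fin s → Fin s → ℝ) (_ : IsBehavior Q ∧ IsLocal Q),
      ∑ x, ∑ y, ENNReal.ofReal (DA x * DB y) *
        relEnt (outDist P x y) (outDist Q x y)

/- ===== auxiliary lemmas ===== -/

section Aux
open Finset

lemma comm4' {A B C D M : Type*} [Fintype A][Fintype B][Fintype C][Fintype D] [AddCommMonoid M]
    (f : A → B → C → D → M) :
    ∑ a, ∑ b, ∑ c, ∑ d, f a b c d = ∑ c, ∑ d, ∑ a, ∑ b, f a b c d := by
  have h1 : (∑ z : A × B × C × D, f z.1 z.2.1 z.2.2.1 z.2.2.2)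
      = ∑ a, ∑ b, ∑ c, ∑ d, f a b c d := by
    simp only [Fintype.sum_prod_type]
  have h2 : (∑ w : C × D × A × B, f w.2.2.1 w.2.2.2 w.1 w.2.1)
      = ∑ c, ∑ d, ∑ a, ∑ b, f a b c d := by
    simp only [Fintype.sum_prod_type]
  rw [← h1, ← h2]
  exact Fintype.sum_equiv
    ⟨fun z => (z.2.2.1, z.2.2.2, z.1, z.2.1), fun w => (w.2.2.1, w.2.2.2, w.1, w.2.1),
      fun z => rfl, fun w => rfl⟩ _ _ (fun z => rfl)

lemma comm3rot' {A B C M : Type*} [Fintype A][Fintype B][Fintype C] [AddCommMonoid M]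
    (f : A → B → C → M) :
    ∑ a, ∑ b, ∑ c, f a b c = ∑ b, ∑ c, ∑ a, f a b c := by
  have h1 : (∑ z : A × B × C, f z.1 z.2.1 z.2.2) = ∑ a, ∑ b, ∑ c, f a b c := by
    simp only [Fintype.sum_prod_type]
  have h2 : (∑ w : B × C × A, f w.2.2 w.1 w.2.1) = ∑ b, ∑ c, ∑ a, f a b c := by
    simp only [Fintype.sum_prod_type]
  rw [← h1, ← h2]
  exact Fintype.sum_equiv ⟨fun z => (z.2.1, z.2.2, z.1), fun w => (w.2.2, w.1, w.2.1),
    fun z => rfl, fun w => rfl⟩ _ _ (fun z => rfl)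

lemma comm6' {A B C D E F M : Type*} [Fintype A][Fintype B][Fintype C][Fintype D][Fintype E]
    [Fintype F] [AddCommMonoid M] (f : A → B → C → D → E → F → M) :
    ∑ a, ∑ b, ∑ c, ∑ d, ∑ e, ∑ g, f a b c d e g
      = ∑ c, ∑ d, ∑ e, ∑ g, ∑ a, ∑ b, f a b c d e g := by
  have h1 : (∑ z : A × B × C × D × E × F, f z.1 z.2.1 z.2.2.1 z.2.2.2.1 z.2.2.2.2.1 z.2.2.2.2.2)
      = ∑ a, ∑ b, ∑ c, ∑ d, ∑ e, ∑ g, f a b c d e g := by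
    simp only [Fintype.sum_prod_type]
  have h2 : (∑ w : C × D × E × F × A × B,
        f w.2.2.2.2.1 w.2.2.2.2.2 w.1 w.2.1 w.2.2.1 w.2.2.2.1)
      = ∑ c, ∑ d, ∑ e, ∑ g, ∑ a, ∑ b, f a b c d e g := by
    simp only [Fintype.sum_prod_type]
  rw [← h1, ← h2]
  exact Fintype.sum_equiv
    ⟨fun z => (z.2.2.1, z.2.2.2.1, z.2.2.2.2.1, z.2.2.2.2.2, z.1, z.2.1),
     fun w => (w.2.2.2.2.1, w.2.2.2.2.2, w.1, w.2.1, w.2.2.1, w.2.2.2.1),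
     fun z => rfl, fun w => rfl⟩ _ _ (fun z => rfl)

lemma comm7' {A B C D U L K M : Type*}
    [Fintype A][Fintype B][Fintype C][Fintype D][Fintype U][Fintype L][Fintype K]
    [AddCommMonoid M] (f : A → B → C → D → U → L → K → M) :
    ∑ a, ∑ b, ∑ c, ∑ d, ∑ u, ∑ l, ∑ k, f a b c d u l k
      = ∑ u, ∑ l, ∑ k, ∑ a, ∑ b, ∑ c, ∑ d, f a b c d u l k := by
  have h1 : (∑ z : A × B × C × D × U × L × K,
        f z.1 z.2.1 z.2.2.1 z.2.2.2.1 z.2.2.2.2.1 z.2.2.2.2.2.1 z.2.2.2.2.2.2)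
      = ∑ a, ∑ b, ∑ c, ∑ d, ∑ u, ∑ l, ∑ k, f a b c d u l k := by
    simp only [Fintype.sum_prod_type]
  have h2 : (∑ w : U × L × K × A × B × C × D,
        f w.2.2.2.1 w.2.2.2.2.1 w.2.2.2.2.2.1 w.2.2.2.2.2.2 w.1 w.2.1 w.2.2.1)
      = ∑ u, ∑ l, ∑ k, ∑ a, ∑ b, ∑ c, ∑ d, f a b c d u l k := by
    simp only [Fintype.sum_prod_type]
  rw [← h1, ← h2]
  exact Fintype.sum_equiv
    ⟨fun z => (z.2.2.2.2.1, z.2.2.2.2.2.1, z.2.2.2.2.2.2, z.1, z.2.1, z.2.2.1, z.2.2.2.1),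
     fun w => (w.2.2.2.1, w.2.2.2.2.1, w.2.2.2.2.2.1, w.2.2.2.2.2.2, w.1, w.2.1, w.2.2.1),
     fun z => rfl, fun w => rfl⟩ _ _ (fun z => rfl)

lemma ofReal_sum_le' {ι : Type*} (s : Finset ι) (f : ι → ℝ) :
    ENNReal.ofReal (∑ i ∈ s, f i) ≤ ∑ i ∈ s, ENNReal.ofReal (f i) := by
  induction s using Finset.cons_induction with
  | empty => simp
  | cons a s ha ih =>
    rw [Finset.sum_cons, Finset.sum_cons]
    exact ENNReal.ofReal_add_le.trans (add_le_add le_rfl ih)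

lemma logSum' {ι : Type*} [Fintype ι] (a b : ι → ℝ) (ha : ∀ i, 0 ≤ a i) (hb : ∀ i, 0 ≤ b i)
    (hab : ∀ i, b i = 0 → a i = 0) :
    (∑ i, a i) * Real.log ((∑ i, a i) / (∑ i, b i)) ≤ ∑ i, a i * Real.log (a i / b i) := by
  set A := ∑ i, a i with hA
  set B := ∑ i, b i with hB
  rcases eq_or_lt_of_le (Finset.sum_nonneg fun i _ => hb i) with h0 | hBpos
  · have hb0 : ∀ i, b i = 0 := by
      intro i
      have := (Finset.sum_eq_zero_iff_of_nonneg (fun i _ => hb i)).mp h0.symm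
      exact this i (mem_univ i)
    have ha0 : ∀ i, a i = 0 := fun i => hab i (hb0 i)
    have : A = 0 := Finset.sum_eq_zero fun i _ => ha0 i
    rw [this, zero_mul]
    exact Finset.sum_nonneg fun i _ => by rw [ha0 i]; simp
  · have hBne : B ≠ 0 := ne_of_gt hBpos
    have jensen := Real.convexOn_mul_log.map_sum_le (t := univ)
      (w := fun i => b i / B) (p := fun i => a i / b i)
      (fun i _ => div_nonneg (hb i) hBpos.le)
      (by rw [← Finset.sum_div, div_self hBne])
      (fun i _ => Set.mem_Ici.mpr (div_nonneg (ha i) (hb i)))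
    have key1 : ∑ i, (b i / B) • (a i / b i) = A / B := by
      rw [hA, Finset.sum_div]
      refine Finset.sum_congr rfl fun i _ => ?_
      rcases eq_or_ne (b i) 0 with h | h
      · simp [h, hab i h]
      · field_simp
        have h1 := mul_inv_cancel₀ h
        have h2 := mul_inv_cancel₀ hBne
        linear_combination (a i * b i * (b i)⁻¹) * h2 + a i * h1
    have key2 : ∀ i, (b i / B) • ((a i / b i) * Real.log (a i / b i))
        = (a i * Real.log (a i / b i)) / B := by
      intro i
      rcases eq_or_ne (b i) 0 with h | h
      · simp [h, hab i h]
      · field_simp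
        have h1 := mul_inv_cancel₀ h
        have h2 := mul_inv_cancel₀ hBne
        simp only [div_eq_mul_inv]
        linear_combination (a i * Real.log (a i * (b i)⁻¹) * b i * (b i)⁻¹) * h2 +
          (a i * Real.log (a i * (b i)⁻¹)) * h1
    rw [key1] at jensen
    simp only [smul_eq_mul] at jensen key2
    rw [Finset.sum_congr rfl (fun i _ => key2 i)] at jensen
    rw [← Finset.sum_div] at jensen
    have := mul_le_mul_of_nonneg_left jensen hBpos.le
    calc A * Real.log (A / B) = B * (A / B * Real.log (A / B)) := by field_simp
      _ ≤ B * ((∑ i, a i * Real.log (a i / b i)) / B) := this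
      _ = ∑ i, a i * Real.log (a i / b i) := by field_simp

lemma dpi' {ι κ : Type*} [Fintype ι] [Fintype κ] (K : ι → κ → ℝ) (p q : ι → ℝ)
    (hK0 : ∀ i j, 0 ≤ K i j) (hK1 : ∀ i, ∑ j, K i j = 1)
    (hp : ∀ i, 0 ≤ p i) (hq : ∀ i, 0 ≤ q i) :
    relEnt (fun j => ∑ i, K i j * p i) (fun j => ∑ i, K i j * q i) ≤ relEnt p q := by
  unfold relEnt
  by_cases hex : ∃ i, p i ≠ 0 ∧ q i = 0
  · rw [if_pos hex]; exact le_top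
  · push_neg at hex
    have hzero : ∀ i, q i = 0 → p i = 0 := by
      intro i h
      by_contra hne
      exact hex i hne h
    have hLnot : ¬ ∃ j, (∑ i, K i j * p i) ≠ 0 ∧ (∑ i, K i j * q i) = 0 := by
      rintro ⟨j, h1, h2⟩
      apply h1
      have hterms := (Finset.sum_eq_zero_iff_of_nonneg
        (fun i _ => mul_nonneg (hK0 i j) (hq i))).mp h2
      refine Finset.sum_eq_zero fun i _ => ?_
      rcases mul_eq_zero.mp (hterms i (mem_univ i)) with h | h
      · rw [h, zero_mul]
      · rw [hzero i h, mul_zero]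
    rw [if_neg hLnot, if_neg (by push_neg; intro i h1 h2; exact absurd h2 (hex i h1))]
    apply ENNReal.ofReal_le_ofReal
    calc ∑ j, (∑ i, K i j * p i) * Real.log ((∑ i, K i j * p i) / (∑ i, K i j * q i))
        ≤ ∑ j, ∑ i, (K i j * p i) * Real.log ((K i j * p i) / (K i j * q i)) := by
          refine Finset.sum_le_sum fun j _ => ?_
          refine logSum' _ _ (fun i => mul_nonneg (hK0 i j) (hp i))
            (fun i => mul_nonneg (hK0 i j) (hq i)) (fun i h => ?_)
          rcases mul_eq_zero.mp h with h | h
          · rw [h, zero_mul]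
          · rw [hzero i h, mul_zero]
      _ = ∑ j, ∑ i, K i j * (p i * Real.log (p i / q i)) := by
          refine Finset.sum_congr rfl fun j _ => Finset.sum_congr rfl fun i _ => ?_
          rcases eq_or_ne (K i j) 0 with h | h
          · simp [h]
          · rw [mul_div_mul_left _ _ h]; ring
      _ = ∑ i, (∑ j, K i j) * (p i * Real.log (p i / q i)) := by
          rw [Finset.sum_comm]
          exact Finset.sum_congr rfl fun i _ => by rw [← Finset.sum_mul]
      _ = ∑ i, p i * Real.log (p i / q i) := by
          refine Finset.sum_congr rfl fun i _ => by rw [hK1 i, one_mul]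

end Aux
section Bell
open Finset

lemma apply_isBehavior {r s rf sf : ℕ} (W : GlobalWiring r s rf sf)
    (Q : Fin r → Fin r → Fin s → Fin s → ℝ) (hQ : IsBehavior Q) :
    IsBehavior (W.apply Q) := by
  constructor
  · intro α β χ ψ
    refine Finset.sum_nonneg fun a _ => Finset.sum_nonneg fun b _ =>
      Finset.sum_nonneg fun x _ => Finset.sum_nonneg fun y _ => ?_
    exact mul_nonneg (mul_nonneg (W.O_nonneg _ _ _ _ _ _ _ _) (hQ.1 _ _ _ _))
      (W.I_nonneg _ _ _ _)
  · intro χ ψ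
    unfold GlobalWiring.apply
    rw [comm6' (fun α β a b x y => W.O α β a b x y χ ψ * Q a b x y * W.I x y χ ψ)]
    have hin : ∀ a b x y, (∑ α, ∑ β, W.O α β a b x y χ ψ * Q a b x y * W.I x y χ ψ)
        = Q a b x y * W.I x y χ ψ := by
      intro a b x y
      have : (∑ α, ∑ β, W.O α β a b x y χ ψ * Q a b x y * W.I x y χ ψ)
          = (∑ α, ∑ β, W.O α β a b x y χ ψ) * (Q a b x y * W.I x y χ ψ) := by
        rw [Finset.sum_mul]
        refine Finset.sum_congr rfl fun α _ => ?_
        rw [Finset.sum_mul]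
        exact Finset.sum_congr rfl fun β _ => by ring
      rw [this, W.O_sum, one_mul]
    calc (∑ a, ∑ b, ∑ x, ∑ y, ∑ α, ∑ β, W.O α β a b x y χ ψ * Q a b x y * W.I x y χ ψ)
        = ∑ a, ∑ b, ∑ x, ∑ y, Q a b x y * W.I x y χ ψ := by
          refine Finset.sum_congr rfl fun a _ => Finset.sum_congr rfl fun b _ =>
            Finset.sum_congr rfl fun x _ => Finset.sum_congr rfl fun y _ => hin a b x y
      _ = ∑ x, ∑ y, ∑ a, ∑ b, Q a b x y * W.I x y χ ψ :=
          comm4' (fun a b x y => Q a b x y * W.I x y χ ψ)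
      _ = ∑ x, ∑ y, W.I x y χ ψ := by
          refine Finset.sum_congr rfl fun x _ => Finset.sum_congr rfl fun y _ => ?_
          have : (∑ a, ∑ b, Q a b x y) * W.I x y χ ψ
              = ∑ a, ∑ b, Q a b x y * W.I x y χ ψ := by
            rw [Finset.sum_mul]
            exact Finset.sum_congr rfl fun a _ => Finset.sum_mul _ _ _
          rw [← this, hQ.2, one_mul]
      _ = 1 := W.I_sum χ ψ

end Bell
section Bell2
open Finset

lemma relEnt_mix_le_Sb {r s rf sf : ℕ} (W : GlobalWiring r s rf sf)
    (P Q : Fin r → Fin r → Fin s → Fin s → ℝ) (χ ψ : Fin sf) :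
    relEnt (fun z : (Fin r × Fin r) × Fin s × Fin s =>
        P z.1.1 z.1.2 z.2.1 z.2.2 * W.I z.2.1 z.2.2 χ ψ)
      (fun z : (Fin r × Fin r) × Fin s × Fin s =>
        Q z.1.1 z.1.2 z.2.1 z.2.2 * W.I z.2.1 z.2.2 χ ψ) ≤ Sb P Q := by
  unfold relEnt
  by_cases hex : ∃ z : (Fin r × Fin r) × Fin s × Fin s,
      P z.1.1 z.1.2 z.2.1 z.2.2 * W.I z.2.1 z.2.2 χ ψ ≠ 0 ∧
      Q z.1.1 z.1.2 z.2.1 z.2.2 * W.I z.2.1 z.2.2 χ ψ = 0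
  · obtain ⟨z, h1, h2⟩ := hex
    have hP := (mul_ne_zero_iff.mp h1).1
    have hI := (mul_ne_zero_iff.mp h1).2
    have hQ : Q z.1.1 z.1.2 z.2.1 z.2.2 = 0 := by
      rcases mul_eq_zero.mp h2 with h | h
      · exact h
      · exact absurd h hI
    have htop : relEnt (outDist P z.2.1 z.2.2) (outDist Q z.2.1 z.2.2) = ⊤ := by
      unfold relEnt
      rw [if_pos ⟨z.1, hP, hQ⟩]
    have hle : relEnt (outDist P z.2.1 z.2.2) (outDist Q z.2.1 z.2.2) ≤ Sb P Q :=
      Finset.le_sup (f := fun xy : Fin s × Fin s =>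
        relEnt (outDist P xy.1 xy.2) (outDist Q xy.1 xy.2)) (mem_univ z.2)
    rw [htop] at hle
    exact le_trans le_top hle
  · rw [if_neg hex]
    push_neg at hex
    have key : (∑ z : (Fin r × Fin r) × Fin s × Fin s,
          P z.1.1 z.1.2 z.2.1 z.2.2 * W.I z.2.1 z.2.2 χ ψ *
            Real.log ((P z.1.1 z.1.2 z.2.1 z.2.2 * W.I z.2.1 z.2.2 χ ψ) /
              (Q z.1.1 z.1.2 z.2.1 z.2.2 * W.I z.2.1 z.2.2 χ ψ)))
        = ∑ xy : Fin s × Fin s, W.I xy.1 xy.2 χ ψ *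
            ∑ ab : Fin r × Fin r, outDist P xy.1 xy.2 ab *
              Real.log (outDist P xy.1 xy.2 ab / outDist Q xy.1 xy.2 ab) := by
      rw [Fintype.sum_prod_type, Finset.sum_comm]
      refine Finset.sum_congr rfl fun xy _ => ?_
      rw [Finset.mul_sum]
      refine Finset.sum_congr rfl fun ab _ => ?_
      show P ab.1 ab.2 xy.1 xy.2 * W.I xy.1 xy.2 χ ψ * _ = _
      rcases eq_or_ne (W.I xy.1 xy.2 χ ψ) 0 with h | h
      · simp [h]
      · rcases eq_or_ne (P ab.1 ab.2 xy.1 xy.2) 0 with hp | hp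
        · simp [outDist, hp]
        · have hμ : P ab.1 ab.2 xy.1 xy.2 * W.I xy.1 xy.2 χ ψ ≠ 0 := mul_ne_zero hp h
          have hQI := hex (ab, xy) hμ
          unfold outDist
          rw [mul_div_mul_right _ _ h]
          ring
    rw [key]
    refine le_trans (ofReal_sum_le' _ _) ?_
    have hstep : ∀ xy : Fin s × Fin s,
        ENNReal.ofReal (W.I xy.1 xy.2 χ ψ *
          ∑ ab : Fin r × Fin r, outDist P xy.1 xy.2 ab *
            Real.log (outDist P xy.1 xy.2 ab / outDist Q xy.1 xy.2 ab))
        ≤ ENNReal.ofReal (W.I xy.1 xy.2 χ ψ) * Sb P Q := by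
      intro xy
      rw [ENNReal.ofReal_mul (W.I_nonneg _ _ _ _)]
      refine mul_le_mul_right ?_ _
      have h1 : ENNReal.ofReal (∑ ab : Fin r × Fin r, outDist P xy.1 xy.2 ab *
            Real.log (outDist P xy.1 xy.2 ab / outDist Q xy.1 xy.2 ab))
          ≤ relEnt (outDist P xy.1 xy.2) (outDist Q xy.1 xy.2) := by
        unfold relEnt
        split_ifs
        · exact le_top
        · exact le_rfl
      exact h1.trans (Finset.le_sup (f := fun xy : Fin s × Fin s =>
        relEnt (outDist P xy.1 xy.2) (outDist Q xy.1 xy.2)) (mem_univ xy))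
    refine le_trans (Finset.sum_le_sum fun xy _ => hstep xy) ?_
    rw [← Finset.sum_mul]
    have hI1 : (∑ xy : Fin s × Fin s, ENNReal.ofReal (W.I xy.1 xy.2 χ ψ)) = 1 := by
      rw [← ENNReal.ofReal_sum_of_nonneg (fun xy _ => W.I_nonneg _ _ _ _)]
      rw [Fintype.sum_prod_type]
      rw [W.I_sum χ ψ, ENNReal.ofReal_one]
    rw [hI1, one_mul]

end Bell2
section T
open Finset
set_option maxHeartbeats 1000000 in
lemma Sb_apply_le {r s rf sf : ℕ} (W : GlobalWiring r s rf sf)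
    (P Q : Fin r → Fin r → Fin s → Fin s → ℝ)
    (hP : ∀ a b x y, 0 ≤ P a b x y) (hQ : ∀ a b x y, 0 ≤ Q a b x y) :
    Sb (W.apply P) (W.apply Q) ≤ Sb P Q := by
  refine Finset.sup_le fun χψ _ => ?_
  obtain ⟨χ, ψ⟩ := χψ
  have hout : ∀ R : Fin r → Fin r → Fin s → Fin s → ℝ,
      outDist (W.apply R) χ ψ = fun ω : Fin rf × Fin rf =>
        ∑ z : (Fin r × Fin r) × Fin s × Fin s,
          W.O ω.1 ω.2 z.1.1 z.1.2 z.2.1 z.2.2 χ ψ *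
            (R z.1.1 z.1.2 z.2.1 z.2.2 * W.I z.2.1 z.2.2 χ ψ) := by
    intro R
    funext ω
    show W.apply R ω.1 ω.2 χ ψ = _
    unfold GlobalWiring.apply
    simp only [Fintype.sum_prod_type]
    exact Finset.sum_congr rfl fun a _ => Finset.sum_congr rfl fun b _ =>
      Finset.sum_congr rfl fun x _ => Finset.sum_congr rfl fun y _ => by ring
  have hdpi := dpi' (fun (z : (Fin r × Fin r) × Fin s × Fin s) (ω : Fin rf × Fin rf) =>
      W.O ω.1 ω.2 z.1.1 z.1.2 z.2.1 z.2.2 χ ψ)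
    (fun z => P z.1.1 z.1.2 z.2.1 z.2.2 * W.I z.2.1 z.2.2 χ ψ)
    (fun z => Q z.1.1 z.1.2 z.2.1 z.2.2 * W.I z.2.1 z.2.2 χ ψ)
    (fun z ω => W.O_nonneg _ _ _ _ _ _ _ _)
    (fun z => by rw [Fintype.sum_prod_type]; exact W.O_sum _ _ _ _ χ ψ)
    (fun z => mul_nonneg (hP _ _ _ _) (W.I_nonneg _ _ _ _))
    (fun z => mul_nonneg (hQ _ _ _ _) (W.I_nonneg _ _ _ _))
  show relEnt (outDist (W.apply P) χ ψ) (outDist (W.apply Q) χ ψ) ≤ Sb P Q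
  rw [hout P, hout Q]
  exact le_trans hdpi (relEnt_mix_le_Sb W P Q χ ψ)
end T
section Bell4
open Finset

lemma apply_isLocal {r s rf sf : ℕ} (W : GlobalWiring r s rf sf) (hW : W.IsLOSR)
    (Q : Fin r → Fin r → Fin s → Fin s → ℝ) (hQl : IsLocal Q) :
    IsLocal (W.apply Q) := by
  obtain ⟨nI, mO, qI, qO, IA, IB, OA, OB, hqI, hqO, hIA, hIB, hOA, hOB, hI, hO⟩ := hW
  obtain ⟨nQ, qQ, QA, QB, hqQ, hQA, hQB, hQeq⟩ := hQl
  set e := Fintype.equivFin (Fin mO × Fin nQ × Fin nI) with he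
  refine ⟨Fintype.card (Fin mO × Fin nQ × Fin nI),
    fun i => qO (e.symm i).1 * qQ (e.symm i).2.1 * qI (e.symm i).2.2,
    fun α χ i => ∑ a, ∑ x,
      OA α a x χ (e.symm i).1 * QA a x (e.symm i).2.1 * IA x χ (e.symm i).2.2,
    fun β ψ i => ∑ b, ∑ y,
      OB β b y ψ (e.symm i).1 * QB b y (e.symm i).2.1 * IB y ψ (e.symm i).2.2,
    ⟨fun i => mul_nonneg (mul_nonneg (hqO.1 _) (hqQ.1 _)) (hqI.1 _), ?_⟩, ?_, ?_, ?_⟩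
  · -- weights sum to 1
    rw [← Equiv.sum_comp e (fun i => qO (e.symm i).1 * qQ (e.symm i).2.1 * qI (e.symm i).2.2)]
    simp only [Equiv.symm_apply_apply]
    rw [show (∑ t : (Fin mO × Fin nQ × Fin nI), qO t.1 * qQ t.2.1 * qI t.2.2)
        = ∑ u, ∑ l, ∑ k, qO u * qQ l * qI k from by simp only [Fintype.sum_prod_type]]
    calc (∑ u, ∑ l, ∑ k, qO u * qQ l * qI k)
        = ∑ u, ∑ l, qO u * qQ l := by
          refine Finset.sum_congr rfl fun u _ => Finset.sum_congr rfl fun l _ => ?_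
          rw [← Finset.mul_sum, hqI.2, mul_one]
      _ = ∑ u, qO u := by
          refine Finset.sum_congr rfl fun u _ => ?_
          rw [← Finset.mul_sum, hqQ.2, mul_one]
      _ = 1 := hqO.2
  · -- PA is a conditional distribution
    intro χ i
    refine ⟨fun α => Finset.sum_nonneg fun a _ => Finset.sum_nonneg fun x _ =>
      mul_nonneg (mul_nonneg ((hOA _ _ _ _).1 _) ((hQA _ _).1 _)) ((hIA _ _).1 _), ?_⟩
    rw [comm3rot' (fun α a x =>
      OA α a x χ (e.symm i).1 * QA a x (e.symm i).2.1 * IA x χ (e.symm i).2.2)]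
    calc (∑ a, ∑ x, ∑ α,
            OA α a x χ (e.symm i).1 * QA a x (e.symm i).2.1 * IA x χ (e.symm i).2.2)
        = ∑ a, ∑ x, QA a x (e.symm i).2.1 * IA x χ (e.symm i).2.2 := by
          refine Finset.sum_congr rfl fun a _ => Finset.sum_congr rfl fun x _ => ?_
          rw [← Finset.sum_mul, ← Finset.sum_mul, (hOA a x χ (e.symm i).1).2, one_mul]
      _ = ∑ x, (∑ a, QA a x (e.symm i).2.1) * IA x χ (e.symm i).2.2 := by
          rw [Finset.sum_comm]
          exact Finset.sum_congr rfl fun x _ => (Finset.sum_mul _ _ _).symm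
      _ = ∑ x, IA x χ (e.symm i).2.2 := by
          refine Finset.sum_congr rfl fun x _ => ?_
          rw [(hQA x (e.symm i).2.1).2, one_mul]
      _ = 1 := (hIA χ (e.symm i).2.2).2
  · -- PB is a conditional distribution
    intro ψ i
    refine ⟨fun β => Finset.sum_nonneg fun b _ => Finset.sum_nonneg fun y _ =>
      mul_nonneg (mul_nonneg ((hOB _ _ _ _).1 _) ((hQB _ _).1 _)) ((hIB _ _).1 _), ?_⟩
    rw [comm3rot' (fun β b y =>
      OB β b y ψ (e.symm i).1 * QB b y (e.symm i).2.1 * IB y ψ (e.symm i).2.2)]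
    calc (∑ b, ∑ y, ∑ β,
            OB β b y ψ (e.symm i).1 * QB b y (e.symm i).2.1 * IB y ψ (e.symm i).2.2)
        = ∑ b, ∑ y, QB b y (e.symm i).2.1 * IB y ψ (e.symm i).2.2 := by
          refine Finset.sum_congr rfl fun b _ => Finset.sum_congr rfl fun y _ => ?_
          rw [← Finset.sum_mul, ← Finset.sum_mul, (hOB b y ψ (e.symm i).1).2, one_mul]
      _ = ∑ y, (∑ b, QB b y (e.symm i).2.1) * IB y ψ (e.symm i).2.2 := by
          rw [Finset.sum_comm]
          exact Finset.sum_congr rfl fun y _ => (Finset.sum_mul _ _ _).symm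
      _ = ∑ y, IB y ψ (e.symm i).2.2 := by
          refine Finset.sum_congr rfl fun y _ => ?_
          rw [(hQB y (e.symm i).2.1).2, one_mul]
      _ = 1 := (hIB ψ (e.symm i).2.2).2
  · -- the factorization identity
    intro α β χ ψ
    have hterm : ∀ (a b : Fin r) (x y : Fin s),
        W.O α β a b x y χ ψ * Q a b x y * W.I x y χ ψ
          = ∑ u, ∑ l, ∑ k,
              (qO u * OA α a x χ u * OB β b y ψ u) * (qQ l * QA a x l * QB b y l) *
                (qI k * IA x χ k * IB y ψ k) := by
      intro a b x y
      rw [hO, hQeq, hI, Finset.sum_mul_sum, Finset.sum_mul]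
      refine Finset.sum_congr rfl fun u _ => ?_
      rw [Finset.sum_mul_sum]
    have hL : W.apply Q α β χ ψ
        = ∑ u, ∑ l, ∑ k, ∑ a, ∑ b, ∑ x, ∑ y,
            (qO u * OA α a x χ u * OB β b y ψ u) * (qQ l * QA a x l * QB b y l) *
              (qI k * IA x χ k * IB y ψ k) := by
      unfold GlobalWiring.apply
      rw [Finset.sum_congr rfl fun a _ => Finset.sum_congr rfl fun b _ =>
        Finset.sum_congr rfl fun x _ => Finset.sum_congr rfl fun y _ => hterm a b x y]
      exact comm7' (fun a b x y u l k =>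
        (qO u * OA α a x χ u * OB β b y ψ u) * (qQ l * QA a x l * QB b y l) *
          (qI k * IA x χ k * IB y ψ k))
    rw [hL, ← Equiv.sum_comp e (fun i =>
      (qO (e.symm i).1 * qQ (e.symm i).2.1 * qI (e.symm i).2.2) *
        (∑ a, ∑ x, OA α a x χ (e.symm i).1 * QA a x (e.symm i).2.1 * IA x χ (e.symm i).2.2) *
        (∑ b, ∑ y, OB β b y ψ (e.symm i).1 * QB b y (e.symm i).2.1 * IB y ψ (e.symm i).2.2))]
    simp only [Equiv.symm_apply_apply]
    rw [show (∑ t : (Fin mO × Fin nQ × Fin nI), (qO t.1 * qQ t.2.1 * qI t.2.2) *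
          (∑ a, ∑ x, OA α a x χ t.1 * QA a x t.2.1 * IA x χ t.2.2) *
          (∑ b, ∑ y, OB β b y ψ t.1 * QB b y t.2.1 * IB y ψ t.2.2))
        = ∑ u, ∑ l, ∑ k, (qO u * qQ l * qI k) *
            (∑ a, ∑ x, OA α a x χ u * QA a x l * IA x χ k) *
            (∑ b, ∑ y, OB β b y ψ u * QB b y l * IB y ψ k) from by
      simp only [Fintype.sum_prod_type]]
    refine Finset.sum_congr rfl fun u _ => Finset.sum_congr rfl fun l _ =>
      Finset.sum_congr rfl fun k _ => ?_
    rw [mul_assoc, Finset.sum_mul_sum]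
    rw [Finset.mul_sum]
    refine Finset.sum_congr rfl fun a _ => ?_
    rw [Finset.mul_sum]
    refine Finset.sum_congr rfl fun b _ => ?_
    rw [Finset.sum_mul_sum, Finset.mul_sum]
    refine Finset.sum_congr rfl fun x _ => ?_
    rw [Finset.mul_sum]
    refine Finset.sum_congr rfl fun y _ => ?_
    ring

end Bell4
section FinalAux
open Finset

lemma relEnt_self_eq_zero {Z : Type*} [Fintype Z] (p : Z → ℝ) : relEnt p p = 0 := by
  unfold relEnt
  rw [if_neg (by rintro ⟨z, h1, h2⟩; exact h1 h2)]
  rw [Finset.sum_eq_zero fun z _ => ?_, ENNReal.ofReal_zero]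
  rcases eq_or_ne (p z) 0 with h | h
  · rw [h, zero_mul]
  · rw [div_self h, Real.log_one, mul_zero]

lemma Sb_self_eq_zero {r s : ℕ} (Q : Fin r → Fin r → Fin s → Fin s → ℝ) : Sb Q Q = 0 := by
  refine le_antisymm (Finset.sup_le fun xy _ => ?_) zero_le
  exact le_of_eq (relEnt_self_eq_zero _)

end FinalAux

/-- the relative entropy of nonlocality is a Bell nonlocality
monotone. -/
theorem Snl_Bell_monotone {r s rf sf : ℕ} (hrf : 0 < rf)
    (P : Fin r → Fin r → Fin s → Fin s → ℝ)
    (hP : IsBehavior P) (hPns : NoSignaling P)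
    (W : GlobalWiring r s rf sf) (hW : W.IsLOSR) :
    Snl (W.apply P) ≤ Snl P ∧
      ∀ Q : Fin r → Fin r → Fin s → Fin s → ℝ,
        IsBehavior Q → IsLocal Q → Snl Q = 0 := by
  constructor
  · refine le_iInf fun Q => le_iInf fun hQ => ?_
    obtain ⟨hQb, hQl⟩ := hQ
    have h1 : Snl (W.apply P) ≤ Sb (W.apply P) (W.apply Q) :=
      iInf_le_of_le (W.apply Q)
        (iInf_le_of_le ⟨apply_isBehavior W Q hQb, apply_isLocal W hW Q hQl⟩ le_rfl)
    exact h1.trans (Sb_apply_le W P Q hP.1 hQb.1)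
  · intro Q hQb hQl
    refine le_antisymm ?_ zero_le
    rw [← Sb_self_eq_zero Q]
    exact iInf_le_of_le Q (iInf_le_of_le ⟨hQb, hQl⟩ le_rfl)
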